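/- arXiv:2404.06002 — 2 statements merged into one kernel-verified Lean document; each statement's English description precedes it below -/
import Mathlib

section
/- Let F be a forest with λ_LC(F) = (κ_1, …, κ_m) and let e = uv be an internal edge of F. (a) If both u and v are deep vertices of degree 2, with N(u) = {t, v} and N(v) = {u, w}, then λ_LC(F ∖ e) is obtained from λ_LC(F) by removing the two parts equal to 1 corresponding to the leaf components {u} and {v}, removing the parts κ_i and κ_j equal to the orders of the leaf components containing t and w, and inserting the parts κ_i + 1 and κ_j + 1 (then sorting into nonincreasing order). (b) If exactly one endpoint, say u, is a deep vertex of degree 2, with N(u) = {t, v}, then λ_LC(F ∖ e) is obtained from λ_LC(F) by removing the part 1 corresponding to the leaf component {u}, removing the part κ_i equal to the order of the leaf component containing t, and inserting κ_i + 1. (c) If neither u nor v is a deep vertex of degree 2, then λ_LC(F ∖ e) = λ_LC(F). -/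
open scoped Classical

namespace CSFPaper

noncomputable section

/-- Chromatic symmetric function: the coefficient of a monomial `d` is the number of
proper colorings `κ : V → ℕ` whose color-count vector is `d`. -/
def csf {V : Type*} [Fintype V] (G : SimpleGraph V) : MvPowerSeries ℕ ℚ :=
  fun d : ℕ →₀ ℕ =>
    (Nat.card {κ : V → ℕ //
      (∀ u w : V, G.Adj u w → κ u ≠ κ w) ∧
      ∀ i : ℕ, d i = Nat.card {v : V // κ v = i}} : ℚ)

/-- The star graph on `k` vertices: vertex `0` is adjacent to all other vertices. -/
def starGraph (k : ℕ) : SimpleGraph (Fin k) where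
  Adj a b := a ≠ b ∧ (a.val = 0 ∨ b.val = 0)
  symm := ⟨fun a b h => ⟨h.1.symm, h.2.symm⟩⟩
  loopless := ⟨fun a h => h.1 rfl⟩

/-- The star-basis element `st_λ`. -/
def stPart {n : ℕ} (p : Nat.Partition n) : MvPowerSeries ℕ ℚ :=
  (p.parts.map fun k => csf (starGraph k)).prod

/-- The parts of a multiset of naturals, in nonincreasing order. -/
def descSort (m : Multiset ℕ) : List ℕ := (m.sort (· ≤ ·)).reverse

/-- Lexicographic (strict) order on partitions presented as multisets. -/
def msLexLT (a b : Multiset ℕ) : Prop := List.Lex (· < ·) (descSort a) (descSort b)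

def msLexLE (a b : Multiset ℕ) : Prop := a = b ∨ msLexLT a b

/-- `p` is the leading partition of the expansion with coefficients `c`:
it has a nonzero coefficient and is lexicographically smallest such. -/
def IsLeading {n : ℕ} (c : Nat.Partition n → ℚ) (p : Nat.Partition n) : Prop :=
  c p ≠ 0 ∧ ∀ q : Nat.Partition n, c q ≠ 0 → msLexLE p.parts q.parts

variable {V : Type*}

/-- The set of internal edges: edges whose two endpoints both have degree at least 2. -/
def internalEdges [Fintype V] (G : SimpleGraph V) : Set (Sym2 V) :=
  {e | e ∈ G.edgeSet ∧ ∀ v ∈ e, 2 ≤ G.degree v}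

def numInternalEdges [Fintype V] (G : SimpleGraph V) : ℕ := Nat.card (internalEdges G)

/-- The graph obtained from `G` by deleting all internal edges. -/
def lcGraph [Fintype V] (G : SimpleGraph V) : SimpleGraph V := G.deleteEdges (internalEdges G)

/-- The multiset of orders of the connected components of `G`. -/
def compSizes [Fintype V] (G : SimpleGraph V) : Multiset ℕ :=
  ((Finset.univ : Finset V).image G.connectedComponentMk).val.map
    fun C => Nat.card C.supp

/-- The leaf component partition `λ_LC(F) = λ(F \ I(F))` (as a multiset of component orders). -/
def lcMultiset [Fintype V] (G : SimpleGraph V) : Multiset ℕ := compSizes (lcGraph G)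

/-- The order of the leaf component of `G` containing `x`. -/
def leafCompOrder [Fintype V] (G : SimpleGraph V) (x : V) : ℕ :=
  Nat.card ((lcGraph G).connectedComponentMk x).supp

/-- A deep vertex: an internal vertex all of whose neighbors are internal. -/
def IsDeep [Fintype V] (G : SimpleGraph V) (v : V) : Prop :=
  2 ≤ G.degree v ∧ ∀ u, G.Adj v u → 2 ≤ G.degree u

/-- Dot contraction of the edge `uv`, realized on the same vertex set: the edge is
contracted onto `u`, and `v` becomes the new isolated vertex. -/
def dotContract (G : SimpleGraph V) (u v : V) : SimpleGraph V where
  Adj a b := a ≠ b ∧ a ≠ v ∧ b ≠ v ∧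
    (G.Adj a b ∨ (a = u ∧ G.Adj v b) ∨ (b = u ∧ G.Adj a v))
  symm := by
    refine ⟨?_⟩
    rintro a b ⟨h1, h2, h3, h4⟩
    refine ⟨h1.symm, h3, h2, ?_⟩
    rcases h4 with h | ⟨rfl, h⟩ | ⟨rfl, h⟩
    · exact Or.inl h.symm
    · exact Or.inr (Or.inr ⟨rfl, h.symm⟩)
    · exact Or.inr (Or.inl ⟨rfl, h.symm⟩)
  loopless := by refine ⟨?_⟩; rintro a ⟨h, -⟩; exact h rfl

/-- Leaf contraction of the edge `uv`, realized on the same vertex set: the edge is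
contracted onto `u`, and `v` becomes the new pendant leaf `ℓ_e` attached to `u`. -/
def leafContract (G : SimpleGraph V) (u v : V) : SimpleGraph V where
  Adj a b := a ≠ b ∧ ((a = u ∧ b = v) ∨ (a = v ∧ b = u) ∨ (dotContract G u v).Adj a b)
  symm := by
    refine ⟨?_⟩
    rintro a b ⟨h1, h2⟩
    refine ⟨h1.symm, ?_⟩
    rcases h2 with ⟨rfl, rfl⟩ | ⟨rfl, rfl⟩ | h
    · exact Or.inr (Or.inl ⟨rfl, rfl⟩)
    · exact Or.inl ⟨rfl, rfl⟩
    · exact Or.inr (Or.inr ((dotContract G u v).adj_symm h))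
  loopless := by refine ⟨?_⟩; rintro a ⟨h, -⟩; exact h rfl



section Aux

open SimpleGraph

set_option maxHeartbeats 1000000

variable [Fintype V] {F : SimpleGraph V}
set_option linter.unusedSectionVars false



lemma reach_sup_edge {G : SimpleGraph V} {a b : V} {x y : V}
    (h : (G ⊔ edge a b).Reachable x y) :
    G.Reachable x y ∨ (G.Reachable x a ∧ G.Reachable b y) ∨
      (G.Reachable x b ∧ G.Reachable a y) := by
  obtain ⟨w⟩ := h
  induction w with
  | nil => exact Or.inl (Reachable.refl _)
  | @cons s c yy h p ih =>
    rw [sup_adj, edge_adj] at h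
    rcases h with h | ⟨(⟨rfl, rfl⟩ | ⟨rfl, rfl⟩), hne⟩
    · rcases ih with h' | ⟨h1, h2⟩ | ⟨h1, h2⟩
      · exact Or.inl ((Adj.reachable h).trans h')
      · exact Or.inr (Or.inl ⟨(Adj.reachable h).trans h1, h2⟩)
      · exact Or.inr (Or.inr ⟨(Adj.reachable h).trans h1, h2⟩)
    · rcases ih with h' | ⟨h1, h2⟩ | ⟨h1, h2⟩
      · exact Or.inr (Or.inl ⟨Reachable.refl _, h'⟩)
      · exact Or.inl (h1.symm.trans h2)
      · exact Or.inl h2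
    · rcases ih with h' | ⟨h1, h2⟩ | ⟨h1, h2⟩
      · exact Or.inr (Or.inr ⟨Reachable.refl _, h'⟩)
      · exact Or.inl h2
      · exact Or.inl (h1.symm.trans h2)

lemma reach_sup_edge_iff {G : SimpleGraph V} {a b : V} (hne : a ≠ b) (x y : V) :
    (G ⊔ edge a b).Reachable x y ↔
      G.Reachable x y ∨ (G.Reachable x a ∧ G.Reachable b y) ∨
        (G.Reachable x b ∧ G.Reachable a y) := by
  constructor
  · exact reach_sup_edge
  · have hab : (G ⊔ edge a b).Reachable a b :=
      Adj.reachable (by rw [sup_adj, edge_adj]; exact Or.inr ⟨Or.inl ⟨rfl, rfl⟩, hne⟩)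
    have mono : ∀ {p q : V}, G.Reachable p q → (G ⊔ edge a b).Reachable p q :=
      fun h => h.mono le_sup_left
    rintro (h | ⟨h1, h2⟩ | ⟨h1, h2⟩)
    · exact mono h
    · exact ((mono h1).trans hab).trans (mono h2)
    · exact ((mono h1).trans hab.symm).trans (mono h2)

lemma isolated_reachable {G : SimpleGraph V} {u y : V} (h : ∀ z, ¬ G.Adj u z)
    (hr : G.Reachable u y) : u = y := by
  obtain ⟨w⟩ := hr
  cases w with
  | nil => rfl
  | cons ha _ => exact absurd ha (h _)

lemma supp_isolated {G : SimpleGraph V} {u : V} (h : ∀ z, ¬ G.Adj u z) :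
    (G.connectedComponentMk u).supp = {u} := by
  ext y
  simp only [ConnectedComponent.mem_supp_iff, ConnectedComponent.eq, Set.mem_singleton_iff]
  constructor
  · intro hr; exact (isolated_reachable h hr.symm).symm
  · rintro rfl; rfl


lemma supp_sup_edge_merge {G : SimpleGraph V} {a b : V} (hne : a ≠ b) :
    ((G ⊔ edge a b).connectedComponentMk a).supp =
      (G.connectedComponentMk a).supp ∪ (G.connectedComponentMk b).supp := by
  ext y
  simp only [ConnectedComponent.mem_supp_iff, ConnectedComponent.eq, Set.mem_union]
  rw [reach_sup_edge_iff hne]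
  constructor
  · rintro (h | ⟨h1, h2⟩ | ⟨h1, h2⟩)
    · exact Or.inl h
    · exact Or.inl h1
    · exact Or.inr h1
  · rintro (h | h)
    · exact Or.inl h
    · exact Or.inr (Or.inr ⟨h, Reachable.refl _⟩)

lemma supp_sup_edge_other {G : SimpleGraph V} {a b : V} (hne : a ≠ b) {x : V}
    (hxa : ¬ G.Reachable x a) (hxb : ¬ G.Reachable x b) :
    ((G ⊔ edge a b).connectedComponentMk x).supp = (G.connectedComponentMk x).supp := by
  ext y
  simp only [ConnectedComponent.mem_supp_iff, ConnectedComponent.eq]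
  rw [reach_sup_edge_iff hne]
  constructor
  · rintro (h | ⟨h1, h2⟩ | ⟨h1, h2⟩)
    · exact h
    · exact absurd h2.symm hxb
    · exact absurd h2.symm hxa
  · exact Or.inl
lemma compSizes_sup_edge [Fintype V] (G : SimpleGraph V) {a b : V}
    (hne : a ≠ b) (hnr : ¬ G.Reachable a b) :
    compSizes (G ⊔ edge a b) =
      (Nat.card (G.connectedComponentMk a).supp + Nat.card (G.connectedComponentMk b).supp) ::ₘ
        (((compSizes G).erase (Nat.card (G.connectedComponentMk a).supp)).erase
          (Nat.card (G.connectedComponentMk b).supp)) := by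
  classical
  set G' := G ⊔ edge a b with hG'
  set f : G.ConnectedComponent → ℕ := fun C => Nat.card C.supp with hf
  set f' : G'.ConnectedComponent → ℕ := fun C => Nat.card C.supp with hf'
  set S : Finset G.ConnectedComponent := Finset.univ.image G.connectedComponentMk with hS
  set S' : Finset G'.ConnectedComponent := Finset.univ.image G'.connectedComponentMk with hS'
  set Ca := G.connectedComponentMk a with hCa
  set Cb := G.connectedComponentMk b with hCb
  have hCab : Ca ≠ Cb := fun h => hnr (ConnectedComponent.eq.mp h)
  have hCaS : Ca ∈ S := Finset.mem_image_of_mem _ (Finset.mem_univ a)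
  have hCbS : Cb ∈ S := Finset.mem_image_of_mem _ (Finset.mem_univ b)
  set S₀ : Finset G.ConnectedComponent := (S.erase Ca).erase Cb with hS₀
  -- members of S₀ are components away from a and b
  have hS₀mem : ∀ x : V, G.connectedComponentMk x ∈ S₀ ↔
      ¬ G.Reachable x a ∧ ¬ G.Reachable x b := by
    intro x
    simp only [hS₀, Finset.mem_erase]
    constructor
    · rintro ⟨h1, h2, -⟩
      exact ⟨fun hr => h2 (ConnectedComponent.eq.mpr hr), fun hr => h1 (ConnectedComponent.eq.mpr hr)⟩
    · rintro ⟨h1, h2⟩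
      exact ⟨fun h => h2 (ConnectedComponent.eq.mp h), fun h => h1 (ConnectedComponent.eq.mp h),
        Finset.mem_image_of_mem _ (Finset.mem_univ x)⟩
  -- the map on components
  set φ : G.ConnectedComponent → G'.ConnectedComponent :=
    ConnectedComponent.map (Hom.ofLE (le_sup_left : G ≤ G')) with hφ
  have hφmk : ∀ x : V, φ (G.connectedComponentMk x) = G'.connectedComponentMk x := fun x => rfl
  have hrep : ∀ C : G.ConnectedComponent, ∃ x : V, C = G.connectedComponentMk x :=
    fun C => C.ind (fun x => ⟨x, rfl⟩)
  -- erase facts on S.val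
  have hSval : S.val = Ca ::ₘ Cb ::ₘ S₀.val := by
    have h1 : S₀.val = (S.val.erase Ca).erase Cb := by
      simp [hS₀, Finset.erase_val]
    rw [h1, Multiset.cons_erase, Multiset.cons_erase (Finset.mem_def.mp hCaS)]
    exact Multiset.mem_erase_of_ne hCab.symm |>.mpr (Finset.mem_def.mp hCbS)
  -- S' decomposition
  have hmerge : φ Cb = φ Ca := by
    rw [hCa, hCb, hφmk, hφmk, ConnectedComponent.eq, reach_sup_edge_iff hne]
    exact Or.inr (Or.inr ⟨Reachable.refl _, Reachable.refl _⟩)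
  have hS'eq : S' = insert (φ Ca) (S₀.image φ) := by
    ext C'
    simp only [hS', Finset.mem_image, Finset.mem_insert, Finset.mem_univ, true_and]
    constructor
    · rintro ⟨x, -, rfl⟩
      by_cases hxa : G.Reachable x a
      · left; rw [hCa, hφmk]
        exact ConnectedComponent.eq.mpr (hxa.mono le_sup_left)
      · by_cases hxb : G.Reachable x b
        · left; rw [← hmerge, hCb, hφmk]
          exact ConnectedComponent.eq.mpr (hxb.mono le_sup_left)
        · right
          exact ⟨G.connectedComponentMk x, (hS₀mem x).mpr ⟨hxa, hxb⟩, hφmk x⟩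
    · rintro (rfl | ⟨C, -, rfl⟩)
      · exact ⟨a, (hφmk a).symm⟩
      · obtain ⟨x, rfl⟩ := hrep C
        exact ⟨x, (hφmk x).symm⟩
  have hφCa_not : φ Ca ∉ S₀.image φ := by
    rw [Finset.mem_image]
    rintro ⟨C, hC, hEq⟩
    obtain ⟨x, rfl⟩ := hrep C
    obtain ⟨hxa, hxb⟩ := (hS₀mem x).mp hC
    rw [hCa, hφmk, hφmk, ConnectedComponent.eq, reach_sup_edge_iff hne] at hEq
    rcases hEq with h | ⟨h1, -⟩ | ⟨h1, -⟩
    · exact hxa h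
    · exact hxa h1
    · exact hxb h1
  have hinj : Set.InjOn φ S₀ := by
    intro C hC D hD hEq
    obtain ⟨x, rfl⟩ := hrep C
    obtain ⟨y, rfl⟩ := hrep D
    obtain ⟨hxa, hxb⟩ := (hS₀mem x).mp hC
    rw [hφmk, hφmk, ConnectedComponent.eq, reach_sup_edge_iff hne] at hEq
    rcases hEq with h | ⟨h1, -⟩ | ⟨h1, -⟩
    · exact ConnectedComponent.eq.mpr h
    · exact absurd h1 hxa
    · exact absurd h1 hxb
  have hS'val : S'.val = φ Ca ::ₘ S₀.val.map φ := by
    rw [hS'eq, Finset.insert_val_of_notMem hφCa_not, Finset.image_val_of_injOn hinj]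
  -- compute sizes
  have hfCa' : f' (φ Ca) = f Ca + f Cb := by
    rw [hCa, hφmk, hf', hf]
    simp only
    rw [Nat.card_coe_set_eq, Nat.card_coe_set_eq, Nat.card_coe_set_eq,
      supp_sup_edge_merge hne, Set.ncard_union_eq]
    rw [Set.disjoint_left]
    intro y hya hyb
    rw [ConnectedComponent.mem_supp_iff, ConnectedComponent.eq] at hya hyb
    exact hnr (hya.symm.trans hyb)
  have hfother : ∀ C ∈ S₀.val, f' (φ C) = f C := by
    intro C hC
    obtain ⟨x, rfl⟩ := hrep C
    obtain ⟨hxa, hxb⟩ := (hS₀mem x).mp hC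
    rw [hφmk, hf', hf]
    simp only
    rw [supp_sup_edge_other hne hxa hxb]
  have hmapeq : S₀.val.map (f' ∘ φ) = S₀.val.map f := Multiset.map_congr rfl hfother
  have hLHS : compSizes G' = (f Ca + f Cb) ::ₘ S₀.val.map f := by
    show S'.val.map f' = _
    rw [hS'val, Multiset.map_cons, hfCa', Multiset.map_map, hmapeq]
  have hRHS : compSizes G = f Ca ::ₘ f Cb ::ₘ S₀.val.map f := by
    show S.val.map f = _
    rw [hSval, Multiset.map_cons, Multiset.map_cons]
  rw [hLHS, hRHS]
  show _ = (f Ca + f Cb) ::ₘ _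
  rw [Multiset.erase_cons_head, Multiset.erase_cons_head]

lemma del_adj {u v x y : V} :
    (F.deleteEdges {s(u,v)}).Adj x y ↔
      F.Adj x y ∧ ¬((x = u ∧ y = v) ∨ (x = v ∧ y = u)) := by
  rw [SimpleGraph.deleteEdges_adj, Set.mem_singleton_iff, Sym2.eq_iff]

lemma mem_internal {x y : V} :
    s(x,y) ∈ internalEdges F ↔ F.Adj x y ∧ 2 ≤ F.degree x ∧ 2 ≤ F.degree y := by
  unfold internalEdges
  simp only [Set.mem_setOf_eq, SimpleGraph.mem_edgeSet, Sym2.mem_iff]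
  constructor
  · rintro ⟨h, hd⟩; exact ⟨h, hd x (Or.inl rfl), hd y (Or.inr rfl)⟩
  · rintro ⟨h, h1, h2⟩
    exact ⟨h, fun z hz => by rcases hz with rfl | rfl <;> assumption⟩

lemma lcGraph_adj {x y : V} :
    (lcGraph F).Adj x y ↔ F.Adj x y ∧ ¬(2 ≤ F.degree x ∧ 2 ≤ F.degree y) := by
  unfold lcGraph
  rw [SimpleGraph.deleteEdges_adj]
  constructor
  · rintro ⟨h, hn⟩
    exact ⟨h, fun hd => hn (mem_internal.mpr ⟨h, hd.1, hd.2⟩)⟩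
  · rintro ⟨h, hn⟩
    exact ⟨h, fun hm => hn ⟨(mem_internal.mp hm).2.1, (mem_internal.mp hm).2.2⟩⟩

lemma deg_del_other {u v x : V} (hxu : x ≠ u) (hxv : x ≠ v) :
    (F.deleteEdges {s(u,v)}).degree x = F.degree x := by
  have h : (F.deleteEdges {s(u,v)}).neighborFinset x = F.neighborFinset x := by
    ext z
    simp only [SimpleGraph.mem_neighborFinset, del_adj]
    constructor
    · exact And.left
    · intro h
      refine ⟨h, ?_⟩
      rintro (⟨rfl, rfl⟩ | ⟨rfl, rfl⟩)
      · exact hxu rfl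
      · exact hxv rfl
  show ((F.deleteEdges {s(u,v)}).neighborFinset x).card = (F.neighborFinset x).card
  rw [h]

lemma deg_del_endpoint {u v : V} (huv : F.Adj u v) :
    (F.deleteEdges {s(u,v)}).degree u = F.degree u - 1 := by
  have hne : u ≠ v := huv.ne
  have h : (F.deleteEdges {s(u,v)}).neighborFinset u = (F.neighborFinset u).erase v := by
    ext z
    rw [SimpleGraph.mem_neighborFinset, del_adj, Finset.mem_erase,
      SimpleGraph.mem_neighborFinset]
    constructor
    · rintro ⟨h1, h2⟩
      exact ⟨fun hz => h2 (Or.inl ⟨rfl, hz⟩), h1⟩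
    · rintro ⟨h1, h2⟩
      refine ⟨h2, ?_⟩
      rintro (⟨-, h3⟩ | ⟨h3, -⟩)
      · exact h1 h3
      · exact hne h3
  show ((F.deleteEdges {s(u,v)}).neighborFinset u).card = (F.neighborFinset u).card - 1
  rw [h, Finset.card_erase_of_mem (by rwa [SimpleGraph.mem_neighborFinset])]

lemma neighbors_of_deg2 {u t v : V}
    (hd : F.degree u = 2) (ht : F.Adj u t) (hv : F.Adj u v) (htv : t ≠ v) :
    ∀ z, F.Adj u z ↔ (z = t ∨ z = v) := by
  have hsub : ({t, v} : Finset V) ⊆ F.neighborFinset u := by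
    intro z hz
    rw [Finset.mem_insert, Finset.mem_singleton] at hz
    rw [SimpleGraph.mem_neighborFinset]
    rcases hz with rfl | rfl <;> assumption
  have hcard : (F.neighborFinset u).card ≤ ({t, v} : Finset V).card := by
    rw [Finset.card_pair htv]
    exact le_of_eq hd
  have heq : ({t, v} : Finset V) = F.neighborFinset u :=
    Finset.eq_of_subset_of_card_le hsub hcard
  intro z
  rw [← SimpleGraph.mem_neighborFinset, ← heq, Finset.mem_insert, Finset.mem_singleton]

lemma key_not_deep2 {u v : V} (huv : F.Adj u v) (hdu : 2 ≤ F.degree u)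
    (hdv : 2 ≤ F.degree v) (hu : ¬(IsDeep F u ∧ F.degree u = 2)) :
    ∀ z, F.Adj u z → z ≠ v → (2 ≤ F.degree z ↔ (2 ≤ F.degree u - 1 ∧ 2 ≤ F.degree z)) := by
  intro z hz hzv
  by_cases h3 : 3 ≤ F.degree u
  · exact ⟨fun h => ⟨by omega, h⟩, And.right⟩
  · have hd2 : F.degree u = 2 := by omega
    have hnd : ¬ IsDeep F u := fun hdeep => hu ⟨hdeep, hd2⟩
    unfold IsDeep at hnd
    push_neg at hnd
    obtain ⟨z0, hz0, hz0d⟩ := hnd hdu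
    have hz0v : z0 ≠ v := fun h => by subst h; omega
    have hnb := neighbors_of_deg2 hd2 hz0 huv hz0v
    have hzz0 : z = z0 := by
      rcases (hnb z).mp hz with h | h
      · exact h
      · exact absurd h hzv
    subst hzz0
    constructor
    · intro h; omega
    · intro h; omega

lemma dV_eq {u v : V} (huv : F.Adj u v) :
    (F.deleteEdges {s(u,v)}).degree v = F.degree v - 1 := by
  have h : ({s(u,v)} : Set (Sym2 V)) = {s(v,u)} := by rw [Sym2.eq_swap]
  have h' := deg_del_endpoint (F := F) huv.symm
  rw [Sym2.eq_swap] at h'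
  exact h'

lemma degree_del_cl {u v x : V} :
    @SimpleGraph.degree V (F.deleteEdges {s(u,v)}) x
      (@SimpleGraph.neighborSetFintype V (F.deleteEdges {s(u,v)}) _
        (fun a b => Classical.propDecidable _) x) = (F.deleteEdges {s(u,v)}).degree x := by
  congr 1 <;> exact Subsingleton.elim _ _

lemma lcGraph_del_c {u v : V} (huv : F.Adj u v) (hdu : 2 ≤ F.degree u) (hdv : 2 ≤ F.degree v)
    (hu : ¬(IsDeep F u ∧ F.degree u = 2)) (hv : ¬(IsDeep F v ∧ F.degree v = 2)) :
    lcGraph (F.deleteEdges {s(u,v)}) = lcGraph F := by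
  have hne : u ≠ v := huv.ne
  have kU := key_not_deep2 huv hdu hdv hu
  have kV := key_not_deep2 huv.symm hdv hdu hv
  have dU : (F.deleteEdges {s(u,v)}).degree u = F.degree u - 1 := deg_del_endpoint huv
  have dV : (F.deleteEdges {s(u,v)}).degree v = F.degree v - 1 := dV_eq huv
  ext x y
  rw [lcGraph_adj, lcGraph_adj, del_adj]
  simp only [degree_del_cl]
  by_cases hadj : F.Adj x y
  case neg => simp [hadj]
  simp only [hadj, true_and]
  by_cases hxu : x = u
  · obtain rfl : u = x := hxu.symm
    have hyu : y ≠ u := hadj.ne'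
    by_cases hyv : y = v
    · subst hyv; simp [hdu, hdv]
    · rw [dU, deg_del_other hyu hyv]
      have h1 := kU y hadj hyv
      have h2 : ¬((u = u ∧ y = v) ∨ (u = v ∧ y = u)) := by
        rintro (⟨-, h⟩ | ⟨h, -⟩); exacts [hyv h, hne h]
      constructor
      · rintro ⟨-, hA⟩ ⟨-, hy⟩; exact hA (h1.mp hy)
      · intro hA; exact ⟨h2, fun hB => hA ⟨hdu, h1.mpr hB⟩⟩
  by_cases hxv : x = v
  · obtain rfl : v = x := hxv.symm
    have hyv : y ≠ v := hadj.ne'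
    by_cases hyu : y = u
    · subst hyu; simp [hdu, hdv]
    · rw [dV, deg_del_other hyu hyv]
      have h1 := kV y hadj hyu
      have h2 : ¬((v = u ∧ y = v) ∨ (v = v ∧ y = u)) := by
        rintro (⟨h, -⟩ | ⟨-, h⟩); exacts [hne h.symm, hyu h]
      constructor
      · rintro ⟨-, hA⟩ ⟨-, hy⟩; exact hA (h1.mp hy)
      · intro hA; exact ⟨h2, fun hB => hA ⟨hdv, h1.mpr hB⟩⟩
  · -- x ∉ {u, v}
    rw [deg_del_other hxu hxv]
    by_cases hyu : y = u
    · obtain rfl : u = y := hyu.symm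
      rw [dU]
      have h1 := kU x hadj.symm hxv
      have h2 : ¬((x = u ∧ u = v) ∨ (x = v ∧ u = u)) := by
        rintro (⟨h, -⟩ | ⟨h, -⟩); exacts [hxu h, hxv h]
      constructor
      · rintro ⟨-, hA⟩ ⟨hx, -⟩; exact hA ⟨hx, (h1.mp hx).1⟩
      · intro hA; exact ⟨h2, fun hB => hA ⟨hB.1, hdu⟩⟩
    by_cases hyv : y = v
    · obtain rfl : v = y := hyv.symm
      rw [dV]
      have h1 := kV x hadj.symm hxu
      have h2 : ¬((x = u ∧ v = v) ∨ (x = v ∧ v = u)) := by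
        rintro (⟨h, -⟩ | ⟨h, -⟩); exacts [hxu h, hxv h]
      constructor
      · rintro ⟨-, hA⟩ ⟨hx, -⟩; exact hA ⟨hx, (h1.mp hx).1⟩
      · intro hA; exact ⟨h2, fun hB => hA ⟨hB.1, hdv⟩⟩
    · rw [deg_del_other hyu hyv]
      have h2 : ¬((x = u ∧ y = v) ∨ (x = v ∧ y = u)) := by
        rintro (⟨h, -⟩ | ⟨h, -⟩); exacts [hxu h, hxv h]
      exact ⟨fun h => h.2, fun h => ⟨h2, h⟩⟩

lemma lcGraph_del_b {u v t : V} (huv : F.Adj u v) (hdv : 2 ≤ F.degree v)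
    (hu_deep : IsDeep F u) (hd2 : F.degree u = 2)
    (hv : ¬(IsDeep F v ∧ F.degree v = 2)) (ht : F.Adj u t) (htv : t ≠ v) :
    lcGraph (F.deleteEdges {s(u,v)}) = lcGraph F ⊔ SimpleGraph.edge u t := by
  have hdu : 2 ≤ F.degree u := hu_deep.1
  have hne : u ≠ v := huv.ne
  have hut : u ≠ t := ht.ne
  have hvt : v ≠ t := fun h => htv h.symm
  have hdt : 2 ≤ F.degree t := hu_deep.2 t ht
  have kV := key_not_deep2 huv.symm hdv hdu hv
  have hnb := neighbors_of_deg2 hd2 ht huv htv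
  have dU : (F.deleteEdges {s(u,v)}).degree u = 1 := by
    rw [deg_del_endpoint huv, hd2]
  have dV : (F.deleteEdges {s(u,v)}).degree v = F.degree v - 1 := dV_eq huv
  ext x y
  rw [lcGraph_adj, sup_adj, lcGraph_adj, edge_adj, del_adj]
  simp only [degree_del_cl]
  by_cases hadj : F.Adj x y
  case neg =>
    constructor
    · rintro ⟨⟨h, -⟩, -⟩; exact absurd h hadj
    · rintro (⟨h, -⟩ | ⟨(⟨h1, h2⟩ | ⟨h1, h2⟩), -⟩)
      · exact absurd h hadj
      · exact absurd (show F.Adj x y by rw [h1, h2]; exact ht) hadj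
      · exact absurd (show F.Adj x y by rw [h1, h2]; exact ht.symm) hadj
  simp only [hadj, true_and]
  have hxy : x ≠ y := hadj.ne
  by_cases hxu : x = u
  · obtain rfl : u = x := hxu.symm
    by_cases hyv : y = v
    · obtain rfl : v = y := hyv.symm
      constructor
      · rintro ⟨hA, -⟩; exact absurd (Or.inl ⟨rfl, rfl⟩) hA
      · rintro (hA | ⟨(⟨-, h⟩ | ⟨h, -⟩), -⟩)
        · exact absurd ⟨hdu, hdv⟩ hA
        · exact absurd h hvt
        · exact absurd h hut
    by_cases hyt : y = t
    · obtain rfl : t = y := hyt.symm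
      rw [dU]
      constructor
      · intro _; exact Or.inr ⟨Or.inl ⟨rfl, rfl⟩, hut⟩
      · intro _
        refine ⟨?_, fun hc => absurd hc.1 (by omega)⟩
        rintro (⟨-, h⟩ | ⟨h, -⟩); exacts [htv h, hne h]
    · rcases (hnb y).mp hadj with h | h
      · exact absurd h hyt
      · exact absurd h hyv
  by_cases hyu : y = u
  · obtain rfl : u = y := hyu.symm
    by_cases hxt : x = t
    · obtain rfl : t = x := hxt.symm
      rw [dU, deg_del_other hut.symm hvt.symm]
      constructor
      · intro _; exact Or.inr ⟨Or.inr ⟨rfl, rfl⟩, fun h => hut h.symm⟩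
      · intro _
        refine ⟨?_, fun hc => absurd hc.2 (by omega)⟩
        rintro (⟨h, -⟩ | ⟨h, -⟩); exacts [hut h.symm, hvt h.symm]
    by_cases hxv : x = v
    · obtain rfl : v = x := hxv.symm
      constructor
      · rintro ⟨hA, -⟩; exact absurd (Or.inr ⟨rfl, rfl⟩) hA
      · rintro (hA | ⟨(⟨h, -⟩ | ⟨h, -⟩), -⟩)
        · exact absurd ⟨hdv, hdu⟩ hA
        · exact absurd h.symm hne
        · exact absurd h hvt
    · rcases (hnb x).mp hadj.symm with h | h
      · exact absurd h hxt
      · exact absurd h hxv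
  by_cases hxv : x = v
  · obtain rfl : v = x := hxv.symm
    have hyv : y ≠ v := hadj.ne'
    rw [dV, deg_del_other hyu hyv]
    have h1 := kV y hadj hyu
    have h2 : ¬((v = u ∧ y = v) ∨ (v = v ∧ y = u)) := by
      rintro (⟨h, -⟩ | ⟨-, h⟩); exacts [hne h.symm, hyu h]
    constructor
    · rintro ⟨-, hA⟩; left; rintro ⟨-, hy⟩; exact hA (h1.mp hy)
    · rintro (hA | ⟨(⟨h, -⟩ | ⟨h, -⟩), -⟩)
      · exact ⟨h2, fun hB => hA ⟨hdv, h1.mpr hB⟩⟩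
      · exact absurd h.symm hne
      · exact absurd h hvt
  by_cases hyv : y = v
  · obtain rfl : v = y := hyv.symm
    rw [dV, deg_del_other hxu hxv]
    have h1 := kV x hadj.symm hxu
    have h2 : ¬((x = u ∧ v = v) ∨ (x = v ∧ v = u)) := by
      rintro (⟨h, -⟩ | ⟨h, -⟩); exacts [hxu h, hxv h]
    constructor
    · rintro ⟨-, hA⟩; left; rintro ⟨hx, -⟩; exact hA ⟨hx, (h1.mp hx).1⟩
    · rintro (hA | ⟨(⟨h, -⟩ | ⟨-, h⟩), -⟩)
      · exact ⟨h2, fun hB => hA ⟨hB.1, hdv⟩⟩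
      · exact absurd h hxu
      · exact absurd h.symm hne
  · rw [deg_del_other hxu hxv, deg_del_other hyu hyv]
    have h2 : ¬((x = u ∧ y = v) ∨ (x = v ∧ y = u)) := by
      rintro (⟨h, -⟩ | ⟨h, -⟩); exacts [hxu h, hxv h]
    constructor
    · rintro ⟨-, hA⟩; exact Or.inl hA
    · rintro (hA | ⟨(⟨h, -⟩ | ⟨-, h⟩), -⟩)
      · exact ⟨h2, hA⟩
      · exact absurd h hxu
      · exact absurd h hyu

lemma lcGraph_del_a {u v t w : V} (huv : F.Adj u v)
    (hu_deep : IsDeep F u) (hdu2 : F.degree u = 2)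
    (hv_deep : IsDeep F v) (hdv2 : F.degree v = 2)
    (ht : F.Adj u t) (htv : t ≠ v) (hw : F.Adj v w) (hwu : w ≠ u) :
    lcGraph (F.deleteEdges {s(u,v)}) =
      lcGraph F ⊔ SimpleGraph.edge u t ⊔ SimpleGraph.edge v w := by
  have hdu : 2 ≤ F.degree u := hu_deep.1
  have hdv : 2 ≤ F.degree v := hv_deep.1
  have hne : u ≠ v := huv.ne
  have hut : u ≠ t := ht.ne
  have hvt : v ≠ t := fun h => htv h.symm
  have hvw : v ≠ w := hw.ne
  have huw : u ≠ w := fun h => hwu h.symm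
  have hdt : 2 ≤ F.degree t := hu_deep.2 t ht
  have hdw : 2 ≤ F.degree w := hv_deep.2 w hw
  have hnbu := neighbors_of_deg2 hdu2 ht huv htv
  have hnbv := neighbors_of_deg2 hdv2 huv.symm hw (fun h => hwu h.symm)
  have dU : (F.deleteEdges {s(u,v)}).degree u = 1 := by
    rw [deg_del_endpoint huv, hdu2]
  have dV : (F.deleteEdges {s(u,v)}).degree v = 1 := by
    rw [dV_eq huv, hdv2]
  ext x y
  rw [lcGraph_adj, sup_adj, sup_adj, lcGraph_adj, edge_adj, edge_adj, del_adj]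
  simp only [degree_del_cl]
  by_cases hadj : F.Adj x y
  case neg =>
    constructor
    · rintro ⟨⟨h, -⟩, -⟩; exact absurd h hadj
    · rintro ((⟨h, -⟩ | ⟨(⟨h1, h2⟩ | ⟨h1, h2⟩), -⟩) | ⟨(⟨h1, h2⟩ | ⟨h1, h2⟩), -⟩)
      · exact absurd h hadj
      · exact absurd (show F.Adj x y by rw [h1, h2]; exact ht) hadj
      · exact absurd (show F.Adj x y by rw [h1, h2]; exact ht.symm) hadj
      · exact absurd (show F.Adj x y by rw [h1, h2]; exact hw) hadj
      · exact absurd (show F.Adj x y by rw [h1, h2]; exact hw.symm) hadj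
  simp only [hadj, true_and]
  by_cases hxu : x = u
  · obtain rfl : u = x := hxu.symm
    by_cases hyv : y = v
    · obtain rfl : v = y := hyv.symm
      constructor
      · rintro ⟨hA, -⟩; exact absurd (Or.inl ⟨rfl, rfl⟩) hA
      · rintro ((hA | ⟨(⟨-, h⟩ | ⟨h, -⟩), -⟩) | ⟨(⟨h, -⟩ | ⟨h, -⟩), -⟩)
        · exact absurd ⟨hdu, hdv⟩ hA
        · exact absurd h hvt
        · exact absurd h hut
        · exact absurd h hne
        · exact absurd h huw
    by_cases hyt : y = t
    · obtain rfl : t = y := hyt.symm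
      rw [dU]
      constructor
      · intro _; exact Or.inl (Or.inr ⟨Or.inl ⟨rfl, rfl⟩, hut⟩)
      · intro _
        refine ⟨?_, fun hc => absurd hc.1 (by omega)⟩
        rintro (⟨-, h⟩ | ⟨h, -⟩); exacts [htv h, hne h]
    · rcases (hnbu y).mp hadj with h | h
      · exact absurd h hyt
      · exact absurd h hyv
  by_cases hyu : y = u
  · obtain rfl : u = y := hyu.symm
    by_cases hxt : x = t
    · obtain rfl : t = x := hxt.symm
      rw [dU, deg_del_other hut.symm hvt.symm]
      constructor
      · intro _; exact Or.inl (Or.inr ⟨Or.inr ⟨rfl, rfl⟩, fun h => hut h.symm⟩)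
      · intro _
        refine ⟨?_, fun hc => absurd hc.2 (by omega)⟩
        rintro (⟨h, -⟩ | ⟨h, -⟩); exacts [hut h.symm, hvt h.symm]
    by_cases hxv : x = v
    · obtain rfl : v = x := hxv.symm
      constructor
      · rintro ⟨hA, -⟩; exact absurd (Or.inr ⟨rfl, rfl⟩) hA
      · rintro ((hA | ⟨(⟨h, -⟩ | ⟨h, -⟩), -⟩) | ⟨(⟨-, h⟩ | ⟨h, -⟩), -⟩)
        · exact absurd ⟨hdv, hdu⟩ hA
        · exact absurd h.symm hne
        · exact absurd h hvt
        · exact absurd h huw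
        · exact absurd h hvw
    · rcases (hnbu x).mp hadj.symm with h | h
      · exact absurd h hxt
      · exact absurd h hxv
  by_cases hxv : x = v
  · obtain rfl : v = x := hxv.symm
    by_cases hyw : y = w
    · obtain rfl : w = y := hyw.symm
      rw [dV]
      constructor
      · intro _; exact Or.inr ⟨Or.inl ⟨rfl, rfl⟩, hvw⟩
      · intro _
        refine ⟨?_, fun hc => absurd hc.1 (by omega)⟩
        rintro (⟨h, -⟩ | ⟨-, h⟩); exacts [hne h.symm, hwu h]
    · rcases (hnbv y).mp hadj with h | h
      · exact absurd h hyu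
      · exact absurd h hyw
  by_cases hyv : y = v
  · obtain rfl : v = y := hyv.symm
    by_cases hxw : x = w
    · obtain rfl : w = x := hxw.symm
      rw [dV, deg_del_other hwu (fun h => hvw h.symm)]
      constructor
      · intro _; exact Or.inr ⟨Or.inr ⟨rfl, rfl⟩, fun h => hvw h.symm⟩
      · intro _
        refine ⟨?_, fun hc => absurd hc.2 (by omega)⟩
        rintro (⟨h, -⟩ | ⟨h, -⟩); exacts [hwu h, hvw h.symm]
    · rcases (hnbv x).mp hadj.symm with h | h
      · exact absurd h hxu
      · exact absurd h hxw
  · rw [deg_del_other hxu hxv, deg_del_other hyu hyv]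
    have h2 : ¬((x = u ∧ y = v) ∨ (x = v ∧ y = u)) := by
      rintro (⟨h, -⟩ | ⟨h, -⟩); exacts [hxu h, hxv h]
    constructor
    · rintro ⟨-, hA⟩; exact Or.inl (Or.inl hA)
    · rintro ((hA | ⟨(⟨h, -⟩ | ⟨-, h⟩), -⟩) | ⟨(⟨h, -⟩ | ⟨-, h⟩), -⟩)
      · exact ⟨h2, hA⟩
      · exact absurd h hxu
      · exact absurd h hyu
      · exact absurd h hxv
      · exact absurd h hyv
lemma lcGraph_le : lcGraph F ≤ F := SimpleGraph.deleteEdges_le _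

lemma triangle_ne {u v t : V} (hF : F.IsAcyclic) (huv : F.Adj u v) (hvt : F.Adj v t)
    (htu : F.Adj t u) : False := by
  have hut : u ≠ t := htu.ne'
  have huv' : u ≠ v := huv.ne
  have hvt' : v ≠ t := hvt.ne
  refine hF (.cons huv (.cons hvt (.cons htu .nil))) ?_
  constructor
  · constructor
    · rw [SimpleGraph.Walk.isTrail_def]
      simp only [SimpleGraph.Walk.edges_cons, SimpleGraph.Walk.edges_nil]
      simp [Sym2.eq_iff, hut, huv', hvt', huv'.symm, hut.symm, hvt'.symm]
    · simp
  · simp only [SimpleGraph.Walk.support_cons, SimpleGraph.Walk.support_nil, List.tail_cons]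
    simp [hvt', hut.symm, huv'.symm]

lemma not_reach_tw {u v t w : V} (hF : F.IsAcyclic) (hut : F.Adj u t) (huv : F.Adj u v)
    (hvw : F.Adj v w) (htv : t ≠ v) (hwu : w ≠ u)
    (hisoU : ∀ z, ¬ (lcGraph F).Adj u z) (hisoV : ∀ z, ¬ (lcGraph F).Adj v z) :
    t ≠ w ∧ ¬ (lcGraph F).Reachable t w := by
  have htw : t ≠ w := by
    rintro rfl
    exact triangle_ne hF huv hvw hut.symm
  refine ⟨htw, fun hr => ?_⟩
  -- a path in lcGraph F from t to w
  obtain ⟨q0⟩ := hr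
  set q1 : (lcGraph F).Path t w := q0.toPath with hq1
  have huq : u ∉ q1.val.support := by
    intro hmem
    have : (lcGraph F).Reachable t u := ⟨q1.val.takeUntil u hmem⟩
    exact hut.ne (isolated_reachable hisoU this.symm)
  have hvq : v ∉ q1.val.support := by
    intro hmem
    have : (lcGraph F).Reachable t v := ⟨q1.val.takeUntil v hmem⟩
    exact htv (isolated_reachable hisoV this.symm).symm
  -- map it to F
  set q2 : F.Walk t w := q1.val.mapLe lcGraph_le with hq2
  have hq2path : q2.IsPath := q1.prop.mapLe _
  have hq2supp : q2.support = q1.val.support := by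
    rw [hq2, SimpleGraph.Walk.support_map]
    exact List.map_id _
  -- the explicit path t - u - v - w
  have htu' : t ≠ u := hut.ne'
  have huv' : u ≠ v := huv.ne
  have hvw' : v ≠ w := hvw.ne
  have huw : u ≠ w := fun h => hwu h.symm
  have hP2 : (SimpleGraph.Walk.cons hut.symm
      (SimpleGraph.Walk.cons huv (SimpleGraph.Walk.cons hvw .nil)) : F.Walk t w).IsPath := by
    rw [SimpleGraph.Walk.isPath_def]
    simp only [SimpleGraph.Walk.support_cons, SimpleGraph.Walk.support_nil]
    simp [htu', htv, htw, huv', huw, hvw']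
  have := hF.path_unique ⟨q2, hq2path⟩ ⟨_, hP2⟩
  have hu2 : u ∈ q2.support := by
    rw [Subtype.ext_iff] at this
    simp only at this
    rw [this]
    simp
  rw [hq2supp] at hu2
  exact huq hu2

end Aux

/-- **Deletion Lemma.** How the leaf component partition changes when an
internal edge `e = uv` of a forest is deleted, according to whether the endpoints are
deep vertices of degree 2. -/
theorem deletion_lemma
    {V : Type} [Fintype V] (F : SimpleGraph V) (hF : F.IsAcyclic)
    (u v : V) (he : s(u, v) ∈ internalEdges F) :
    (∀ t w : V, IsDeep F u → F.degree u = 2 → IsDeep F v → F.degree v = 2 →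
      F.Adj u t → t ≠ v → F.Adj v w → w ≠ u →
      lcMultiset (F.deleteEdges {s(u, v)}) =
        (leafCompOrder F t + 1) ::ₘ (leafCompOrder F w + 1) ::ₘ
          ((((lcMultiset F).erase 1).erase 1).erase (leafCompOrder F t)).erase
            (leafCompOrder F w)) ∧
    (∀ t : V, IsDeep F u → F.degree u = 2 → ¬(IsDeep F v ∧ F.degree v = 2) →
      F.Adj u t → t ≠ v →
      lcMultiset (F.deleteEdges {s(u, v)}) =
        (leafCompOrder F t + 1) ::ₘ
          (((lcMultiset F).erase 1).erase (leafCompOrder F t))) ∧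
    (¬(IsDeep F u ∧ F.degree u = 2) → ¬(IsDeep F v ∧ F.degree v = 2) →
      lcMultiset (F.deleteEdges {s(u, v)}) = lcMultiset F) := by
  classical
  obtain ⟨huv, hdu, hdv⟩ := mem_internal.mp he
  have hne : u ≠ v := huv.ne
  refine ⟨?_, ?_, ?_⟩
  · -- case (a)
    intro t w hu_deep hdu2 hv_deep hdv2 ht htv hw hwu
    have hisoU : ∀ z, ¬ (lcGraph F).Adj u z := fun z hz => by
      rw [lcGraph_adj] at hz
      exact hz.2 ⟨hu_deep.1, hu_deep.2 z hz.1⟩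
    have hisoV : ∀ z, ¬ (lcGraph F).Adj v z := fun z hz => by
      rw [lcGraph_adj] at hz
      exact hz.2 ⟨hv_deep.1, hv_deep.2 z hz.1⟩
    have hut : u ≠ t := ht.ne
    have hvt : v ≠ t := fun h => htv h.symm
    have hvw : v ≠ w := hw.ne
    have huw : u ≠ w := fun h => hwu h.symm
    obtain ⟨htw, hnrtw⟩ := not_reach_tw hF ht huv hw htv hwu hisoU hisoV
    have hgraph := lcGraph_del_a huv hu_deep hdu2 hv_deep hdv2 ht htv hw hwu
    have hnr1 : ¬ (lcGraph F).Reachable u t :=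
      fun hr => hut (isolated_reachable hisoU hr)
    have hisoV1 : ∀ z, ¬ (lcGraph F ⊔ SimpleGraph.edge u t).Adj v z := by
      intro z hz
      rw [SimpleGraph.sup_adj, SimpleGraph.edge_adj] at hz
      rcases hz with hz | ⟨(⟨h, -⟩ | ⟨h, -⟩), -⟩
      · exact hisoV z hz
      · exact hne h.symm
      · exact hvt h
    have hnr2 : ¬ (lcGraph F ⊔ SimpleGraph.edge u t).Reachable v w :=
      fun hr => hvw (isolated_reachable hisoV1 hr)
    have hcard1 : Nat.card ((lcGraph F).connectedComponentMk u).supp = 1 := by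
      rw [supp_isolated hisoU, Nat.card_coe_set_eq, Set.ncard_singleton]
    have hcardv : Nat.card ((lcGraph F).connectedComponentMk v).supp = 1 := by
      rw [supp_isolated hisoV, Nat.card_coe_set_eq, Set.ncard_singleton]
    have hcardG1v :
        Nat.card (((lcGraph F ⊔ SimpleGraph.edge u t)).connectedComponentMk v).supp = 1 := by
      rw [supp_isolated hisoV1, Nat.card_coe_set_eq, Set.ncard_singleton]
    have hwru : ¬ (lcGraph F).Reachable w u :=
      fun hr => hwu (isolated_reachable hisoU hr.symm).symm
    have hwrt : ¬ (lcGraph F).Reachable w t := fun hr => hnrtw hr.symm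
    have hcw : Nat.card (((lcGraph F ⊔ SimpleGraph.edge u t)).connectedComponentMk w).supp =
        Nat.card ((lcGraph F).connectedComponentMk w).supp := by
      rw [supp_sup_edge_other hut hwru hwrt]
    set κt := Nat.card ((lcGraph F).connectedComponentMk t).supp with hκt
    set κw := Nat.card ((lcGraph F).connectedComponentMk w).supp with hκw
    have hκtpos : 1 ≤ κt := by
      rw [hκt, Nat.card_coe_set_eq]
      exact (Set.ncard_pos (Set.toFinite _)).mpr
        ⟨t, (SimpleGraph.ConnectedComponent.mem_supp_iff _ _).mpr rfl⟩
    -- pairwise distinct components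
    have hCuv : (lcGraph F).connectedComponentMk u ≠ (lcGraph F).connectedComponentMk v :=
      fun h => hne (isolated_reachable hisoU (SimpleGraph.ConnectedComponent.eq.mp h))
    have hCut : (lcGraph F).connectedComponentMk u ≠ (lcGraph F).connectedComponentMk t :=
      fun h => hut (isolated_reachable hisoU (SimpleGraph.ConnectedComponent.eq.mp h))
    have hCuw : (lcGraph F).connectedComponentMk u ≠ (lcGraph F).connectedComponentMk w :=
      fun h => huw (isolated_reachable hisoU (SimpleGraph.ConnectedComponent.eq.mp h))
    have hCvt : (lcGraph F).connectedComponentMk v ≠ (lcGraph F).connectedComponentMk t :=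
      fun h => hvt (isolated_reachable hisoV (SimpleGraph.ConnectedComponent.eq.mp h))
    have hCvw : (lcGraph F).connectedComponentMk v ≠ (lcGraph F).connectedComponentMk w :=
      fun h => hvw (isolated_reachable hisoV (SimpleGraph.ConnectedComponent.eq.mp h))
    have hCtw : (lcGraph F).connectedComponentMk t ≠ (lcGraph F).connectedComponentMk w :=
      fun h => hnrtw (SimpleGraph.ConnectedComponent.eq.mp h)
    set Cu := (lcGraph F).connectedComponentMk u
    set Cv := (lcGraph F).connectedComponentMk v
    set Ct := (lcGraph F).connectedComponentMk t
    set Cw := (lcGraph F).connectedComponentMk w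
    have hnodup : (Cu ::ₘ Cv ::ₘ Ct ::ₘ {Cw} :
        Multiset (lcGraph F).ConnectedComponent).Nodup := by
      simp [Multiset.nodup_cons, hCuv, hCut, hCuw, hCvt, hCvw, hCtw]
    have hsub : (Cu ::ₘ Cv ::ₘ Ct ::ₘ {Cw} : Multiset (lcGraph F).ConnectedComponent) ⊆
        ((Finset.univ : Finset V).image (lcGraph F).connectedComponentMk).val := by
      intro C hC
      simp only [Multiset.mem_cons, Multiset.mem_singleton] at hC
      rcases hC with rfl | rfl | rfl | rfl <;>
        exact Finset.mem_val.mpr (Finset.mem_image_of_mem _ (Finset.mem_univ _))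
    have hle := (Multiset.le_iff_subset hnodup).mpr hsub
    have hmap : Multiset.map (fun C : (lcGraph F).ConnectedComponent => Nat.card C.supp)
        (Cu ::ₘ Cv ::ₘ Ct ::ₘ {Cw}) = (1 ::ₘ 1 ::ₘ κt ::ₘ {κw} : Multiset ℕ) := by
      simp only [Multiset.map_cons, Multiset.map_singleton]
      rw [hcard1, hcardv]
    have hle4 : (1 ::ₘ 1 ::ₘ κt ::ₘ {κw} : Multiset ℕ) ≤ compSizes (lcGraph F) := by
      rw [← hmap]
      exact Multiset.map_le_map hle
    have h1le := Multiset.erase_le_erase 1 hle4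
    rw [Multiset.erase_cons_head] at h1le
    have h2le := Multiset.erase_le_erase κt h1le
    rw [Multiset.cons_swap, Multiset.erase_cons_head] at h2le
    have h3le := Multiset.erase_le_erase 1 h2le
    rw [Multiset.erase_cons_head] at h3le
    have hκw_mem : κw ∈ (((compSizes (lcGraph F)).erase 1).erase κt).erase 1 :=
      Multiset.mem_of_le h3le (Multiset.mem_singleton_self _)
    show compSizes (lcGraph (F.deleteEdges {s(u, v)})) = _
    rw [hgraph, compSizes_sup_edge _ hvw hnr2, hcardG1v, hcw,
      compSizes_sup_edge _ hut hnr1, hcard1]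
    rw [Multiset.erase_cons_tail _ (show (1 : ℕ) + κt ≠ 1 by omega)]
    rw [Multiset.erase_cons_tail_of_mem hκw_mem]
    rw [Nat.add_comm 1 κw, Nat.add_comm 1 κt, Multiset.cons_swap,
      Multiset.erase_comm ((compSizes (lcGraph F)).erase 1) κt 1]
    rfl
  · -- case (b)
    intro t hu_deep hd2 hv ht htv
    have hisoU : ∀ z, ¬ (lcGraph F).Adj u z := fun z hz => by
      rw [lcGraph_adj] at hz
      exact hz.2 ⟨hu_deep.1, hu_deep.2 z hz.1⟩
    have hut : u ≠ t := ht.ne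
    have hnr : ¬ (lcGraph F).Reachable u t :=
      fun hr => hut (isolated_reachable hisoU hr)
    have hgraph := lcGraph_del_b huv hdv hu_deep hd2 hv ht htv
    have hcard1 : Nat.card ((lcGraph F).connectedComponentMk u).supp = 1 := by
      rw [supp_isolated hisoU, Nat.card_coe_set_eq, Set.ncard_singleton]
    show compSizes (lcGraph (F.deleteEdges {s(u, v)})) = _
    rw [hgraph, compSizes_sup_edge _ hut hnr, hcard1,
      Nat.add_comm 1 (Nat.card ((lcGraph F).connectedComponentMk t).supp)]
    rfl
  · -- case (c)
    intro hu hv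
    show compSizes (lcGraph (F.deleteEdges {s(u, v)})) = _
    rw [lcGraph_del_c huv hdu hdv hu hv]
    rfl

end

end CSFPaper
end

section
/- Let F be a forest and e = uv an internal edge of F. Let κ_i and κ_j be the orders of the leaf components of F containing u and v, respectively. Then λ_LC(F⊙e) is obtained from λ_LC(F) by removing the parts κ_i and κ_j and inserting the part κ_i + κ_j (then sorting into nonincreasing order). -/
open scoped Classical

namespace CSFPaper

noncomputable section

variable {V : Type*}

private lemma walk_closed {V : Type} {G : SimpleGraph V} {T : Set V}
    (hT : ∀ x ∈ T, ∀ y, G.Adj x y → y ∈ T) :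
    ∀ {x y : V}, G.Walk x y → x ∈ T → y ∈ T := by
  intro x y p
  induction p with
  | nil => exact fun h => h
  | cons h q ih => exact fun hx => ih (hT _ hx _ h)

private lemma supp_closed {V : Type} {G : SimpleGraph V} {C : G.ConnectedComponent} {a b : V}
    (h : G.Adj a b) (ha : a ∈ C.supp) : b ∈ C.supp := by
  rw [SimpleGraph.ConnectedComponent.mem_supp_iff] at ha ⊢
  rw [← ha]
  exact (SimpleGraph.ConnectedComponent.sound h.reachable).symm

private lemma unique_nbr {V : Type} [Fintype V] {G : SimpleGraph V} {b u c : V}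
    (h1 : G.Adj b u) (h2 : G.Adj b c) (hd : G.degree b ≤ 1) : c = u := by
  by_contra hne
  have hsub : ({u, c} : Finset V) ⊆ G.neighborFinset b := by
    intro x hx
    rcases Finset.mem_insert.mp hx with rfl | hx
    · exact (SimpleGraph.mem_neighborFinset _ _ _).mpr h1
    · rw [Finset.mem_singleton] at hx; subst hx
      exact (SimpleGraph.mem_neighborFinset _ _ _).mpr h2
  have hcard := Finset.card_le_card hsub
  rw [Finset.card_pair (Ne.symm hne)] at hcard
  rw [SimpleGraph.card_neighborFinset_eq_degree] at hcard
  omega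

private lemma star_supp {V : Type} {G : SimpleGraph V} {u : V}
    (hu : ∀ b, G.Adj u b → ∀ c, G.Adj b c → c = u) :
    (G.connectedComponentMk u).supp = {y | y = u ∨ G.Adj u y} := by
  ext y
  rw [SimpleGraph.ConnectedComponent.mem_supp_iff, SimpleGraph.ConnectedComponent.eq]
  constructor
  · intro h
    obtain ⟨p⟩ := h.symm
    exact walk_closed (T := {y | y = u ∨ G.Adj u y})
      (by rintro x (rfl | hx) z hz
          · exact Or.inr hz
          · exact Or.inl (hu _ hx _ hz)) p (Or.inl rfl)
  · rintro (rfl | h)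
    · exact SimpleGraph.Reachable.refl _
    · exact h.symm.reachable

private lemma reach_transfer {V : Type} {G H : SimpleGraph V} {T : Set V}
    (hG : ∀ a b, G.Adj a b → a ∈ T → b ∈ T)
    (hAdj : ∀ a b, a ∉ T → b ∉ T → G.Adj a b → H.Adj a b) :
    ∀ {x y : V}, G.Walk x y → x ∉ T → H.Reachable x y := by
  intro x y p
  induction p with
  | nil => exact fun _ => SimpleGraph.Reachable.refl _
  | cons h q ih =>
    intro hx
    have hz := fun hz => hx (hG _ _ h.symm hz)
    exact ((hAdj _ _ hx hz h).reachable).trans (ih hz)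

/-- **Leaf-contraction Lemma.** The leaf component partition of the
leaf-contraction of a forest along an internal edge `e = uv`: the orders `κ_i`, `κ_j` of
the leaf components containing `u` and `v` are replaced by `κ_i + κ_j`. -/
theorem leaf_contraction_lemma
    {V : Type} [Fintype V] (F : SimpleGraph V) (hF : F.IsAcyclic)
    (u v : V) (he : s(u, v) ∈ internalEdges F) :
    lcMultiset (leafContract F u v) =
      (leafCompOrder F u + leafCompOrder F v) ::ₘ
        (((lcMultiset F).erase (leafCompOrder F u)).erase (leafCompOrder F v)) := by
  classical
  have huv : F.Adj u v := he.1
  have hdu : 2 ≤ F.degree u := he.2 u (Sym2.mem_mk_left u v)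
  have hdv : 2 ≤ F.degree v := he.2 v (Sym2.mem_mk_right u v)
  have hne : u ≠ v := huv.ne
  -- no common neighbour (acyclicity)
  have hcommon : ∀ w, F.Adj u w → F.Adj v w → False := by
    intro w h1 h2
    have hwu : u ≠ w := h1.ne
    have hwv : v ≠ w := h2.ne
    let p1 : F.Path u v := ⟨SimpleGraph.Walk.cons huv SimpleGraph.Walk.nil, by
      simp [SimpleGraph.Walk.cons_isPath_iff, hne]⟩
    let p2 : F.Path u v := ⟨SimpleGraph.Walk.cons h1 (SimpleGraph.Walk.cons h2.symm
      SimpleGraph.Walk.nil), by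
      simp [SimpleGraph.Walk.cons_isPath_iff, hne, hwu, hwv.symm]⟩
    have hpq := hF.path_unique p1 p2
    have hl := congrArg (fun q : F.Path u v => q.1.length) hpq
    simp [p1, p2] at hl
  -- adjacency in the leaf contraction
  have hGpAdj : ∀ a b : V, (leafContract F u v).Adj a b ↔ a ≠ b ∧
      ((a = u ∧ b = v) ∨ (a = v ∧ b = u) ∨
        (a ≠ b ∧ a ≠ v ∧ b ≠ v ∧
          (F.Adj a b ∨ (a = u ∧ F.Adj v b) ∨ (b = u ∧ F.Adj a v)))) :=
    fun a b => Iff.rfl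
  -- neighbours of v in the contraction
  have hNv : (leafContract F u v).neighborFinset v = {u} := by
    ext b
    rw [SimpleGraph.mem_neighborFinset, Finset.mem_singleton, hGpAdj]
    constructor
    · rintro ⟨h1, (⟨hvu, -⟩ | ⟨-, rfl⟩ | ⟨-, hvv, -, -⟩)⟩
      · exact absurd hvu (Ne.symm hne)
      · rfl
      · exact absurd rfl hvv
    · rintro rfl
      exact ⟨Ne.symm hne, Or.inr (Or.inl ⟨rfl, rfl⟩)⟩
  have hdegv : (leafContract F u v).degree v = 1 := by
    rw [← SimpleGraph.card_neighborFinset_eq_degree, hNv, Finset.card_singleton]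
  -- degree of u in the contraction is at least 2
  have hdegu : 2 ≤ (leafContract F u v).degree u := by
    obtain ⟨w, hw, hwv⟩ := Finset.exists_mem_ne
      (s := F.neighborFinset u) (by rw [SimpleGraph.card_neighborFinset_eq_degree]; omega) v
    have hFuw : F.Adj u w := (SimpleGraph.mem_neighborFinset _ _ _).mp hw
    have hsub : ({v, w} : Finset V) ⊆ (leafContract F u v).neighborFinset u := by
      intro x hx
      rcases Finset.mem_insert.mp hx with rfl | hx
      · exact (SimpleGraph.mem_neighborFinset _ _ _).mpr
          ((hGpAdj u x).mpr ⟨hne, Or.inl ⟨rfl, rfl⟩⟩)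
      · rw [Finset.mem_singleton] at hx; subst hx
        exact (SimpleGraph.mem_neighborFinset _ _ _).mpr
          ((hGpAdj u x).mpr ⟨hFuw.ne, Or.inr (Or.inr ⟨hFuw.ne, hne, hwv, Or.inl hFuw⟩)⟩)
    have hcard := Finset.card_le_card hsub
    rw [Finset.card_pair (Ne.symm hwv), SimpleGraph.card_neighborFinset_eq_degree] at hcard
    exact hcard
  -- degrees of other vertices are unchanged
  have hNo : ∀ w, w ≠ u → w ≠ v → (leafContract F u v).neighborFinset w =
      (F.neighborFinset w).image (fun x => if x = v then u else x) := by
    intro w hwu hwv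
    ext b
    rw [SimpleGraph.mem_neighborFinset, Finset.mem_image]
    constructor
    · rw [hGpAdj]
      rintro ⟨h1, (⟨rfl, -⟩ | ⟨rfl, -⟩ | ⟨-, -, hbv, (h | ⟨rfl, -⟩ | ⟨rfl, h⟩)⟩)⟩
      · exact absurd rfl hwu
      · exact absurd rfl hwv
      · exact ⟨b, (SimpleGraph.mem_neighborFinset _ _ _).mpr h, if_neg hbv⟩
      · exact absurd rfl hwu
      · exact ⟨v, (SimpleGraph.mem_neighborFinset _ _ _).mpr h, if_pos rfl⟩
    · rintro ⟨x, hx, rfl⟩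
      rw [SimpleGraph.mem_neighborFinset] at hx
      rw [hGpAdj]
      by_cases hxv : x = v
      · subst hxv
        rw [if_pos rfl]
        exact ⟨hwu, Or.inr (Or.inr ⟨hwu, hwv, hne, Or.inr (Or.inr ⟨rfl, hx⟩)⟩)⟩
      · rw [if_neg hxv]
        exact ⟨hx.ne, Or.inr (Or.inr ⟨hx.ne, hwv, hxv, Or.inl hx⟩)⟩
  have hdego : ∀ w, w ≠ u → w ≠ v → (leafContract F u v).degree w = F.degree w := by
    intro w hwu hwv
    rw [← SimpleGraph.card_neighborFinset_eq_degree, hNo w hwu hwv,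
      Finset.card_image_of_injOn, SimpleGraph.card_neighborFinset_eq_degree]
    intro x hx y hy hxy0
    have hxy : (if x = v then u else x) = (if y = v then u else y) := hxy0
    rw [Finset.mem_coe, SimpleGraph.mem_neighborFinset] at hx hy
    by_cases h1 : x = v <;> by_cases h2 : y = v
    · rw [h1, h2]
    · rw [if_pos h1, if_neg h2] at hxy
      subst h1
      rw [← hxy] at hy
      exact (hcommon w hy.symm hx.symm).elim
    · rw [if_neg h1, if_pos h2] at hxy
      subst h2
      rw [hxy] at hx
      exact (hcommon w hx.symm hy.symm).elim
    · rwa [if_neg h1, if_neg h2] at hxy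
  -- adjacency in lcGraph
  have hlc : ∀ (G : SimpleGraph V) (a b : V), (lcGraph G).Adj a b ↔
      G.Adj a b ∧ (G.degree a ≤ 1 ∨ G.degree b ≤ 1) := by
    intro G a b
    rw [lcGraph, SimpleGraph.deleteEdges_adj]
    constructor
    · rintro ⟨h, h2⟩
      refine ⟨h, ?_⟩
      by_contra hc
      push_neg at hc
      exact h2 ⟨h, fun x hx => by
        rcases Sym2.mem_iff.mp hx with rfl | rfl
        · omega
        · omega⟩
    · rintro ⟨h, h2⟩
      refine ⟨h, fun hint => ?_⟩
      have ha := hint.2 a (Sym2.mem_mk_left a b)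
      have hb := hint.2 b (Sym2.mem_mk_right a b)
      omega
  -- adjacency with u, v in lcGraph F
  have hF'u : ∀ b, (lcGraph F).Adj u b ↔ F.Adj u b ∧ F.degree b ≤ 1 := by
    intro b
    rw [hlc]
    constructor
    · rintro ⟨h, h2 | h2⟩
      · omega
      · exact ⟨h, h2⟩
    · rintro ⟨h, h2⟩
      exact ⟨h, Or.inr h2⟩
  have hF'v : ∀ b, (lcGraph F).Adj v b ↔ F.Adj v b ∧ F.degree b ≤ 1 := by
    intro b
    rw [hlc]
    constructor
    · rintro ⟨h, h2 | h2⟩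
      · omega
      · exact ⟨h, h2⟩
    · rintro ⟨h, h2⟩
      exact ⟨h, Or.inr h2⟩
  -- adjacency with u in lcGraph of the contraction
  have hGqu : ∀ b, (lcGraph (leafContract F u v)).Adj u b ↔
      (b = v ∨ ((F.Adj u b ∨ F.Adj v b) ∧ F.degree b ≤ 1)) := by
    intro b
    rw [hlc]
    by_cases hbv : b = v
    · subst hbv
      simp only [eq_self_iff_true, true_or, iff_true]
      exact ⟨(hGpAdj u b).mpr ⟨hne, Or.inl ⟨rfl, rfl⟩⟩, Or.inr (by omega)⟩
    · by_cases hbu : b = u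
      · subst hbu
        constructor
        · rintro ⟨h, -⟩
          exact absurd rfl h.ne
        · rintro (h | ⟨-, h2⟩)
          · exact absurd h hbv
          · omega
      · constructor
        · rintro ⟨h, h2 | h2⟩
          · omega
          · rw [hdego b hbu hbv] at h2
            rcases (hGpAdj u b).mp h with ⟨-, (⟨-, h3⟩ | ⟨h3, -⟩ | ⟨-, -, -, (h3 | ⟨-, h3⟩ | ⟨h3, -⟩)⟩)⟩
            · exact absurd h3 hbv
            · exact absurd h3 hne
            · exact Or.inr ⟨Or.inl h3, h2⟩
            · exact Or.inr ⟨Or.inr h3, h2⟩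
            · exact absurd h3 hbu
        · rintro (h | ⟨h1, h2⟩)
          · exact absurd h hbv
          · refine ⟨(hGpAdj u b).mpr ⟨Ne.symm hbu, Or.inr (Or.inr
              ⟨Ne.symm hbu, hne, hbv, ?_⟩)⟩, Or.inr (by rw [hdego b hbu hbv]; omega)⟩
            rcases h1 with h1 | h1
            · exact Or.inl h1
            · exact Or.inr (Or.inl ⟨rfl, h1⟩)
  -- supp of components of u, v in lcGraph F
  have hSFu : ((lcGraph F).connectedComponentMk u).supp
      = {y | y = u ∨ (F.Adj u y ∧ F.degree y ≤ 1)} := by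
    rw [star_supp (fun b hb c hc => unique_nbr (((hF'u b).mp hb).1).symm
      ((hlc F b c).mp hc).1 ((hF'u b).mp hb).2)]
    ext y
    simp only [Set.mem_setOf_eq, hF'u]
  have hSFv : ((lcGraph F).connectedComponentMk v).supp
      = {y | y = v ∨ (F.Adj v y ∧ F.degree y ≤ 1)} := by
    rw [star_supp (fun b hb c hc => unique_nbr (((hF'v b).mp hb).1).symm
      ((hlc F b c).mp hc).1 ((hF'v b).mp hb).2)]
    ext y
    simp only [Set.mem_setOf_eq, hF'v]
  -- supp of the component of u in the contraction
  have hSGu : ((lcGraph (leafContract F u v)).connectedComponentMk u).supp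
      = ((lcGraph F).connectedComponentMk u).supp ∪ ((lcGraph F).connectedComponentMk v).supp := by
    have hstar : ∀ b, (lcGraph (leafContract F u v)).Adj u b →
        ∀ c, (lcGraph (leafContract F u v)).Adj b c → c = u := by
      intro b hb c hc
      have hbGp : (leafContract F u v).Adj b u :=
        (((hlc _ u b).mp hb).1).symm
      have hcGp : (leafContract F u v).Adj b c := ((hlc _ b c).mp hc).1
      rcases (hGqu b).mp hb with rfl | ⟨h1, h2⟩
      · -- b = v , its unique neighbour is u
        have hmem := (SimpleGraph.mem_neighborFinset _ _ _).mpr hcGp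
        rw [hNv] at hmem
        exact Finset.mem_singleton.mp hmem
      · have hbu : b ≠ u := by rintro rfl; omega
        have hbv : b ≠ v := by rintro rfl; omega
        exact unique_nbr hbGp hcGp (by rw [hdego b hbu hbv]; omega)
    rw [star_supp hstar, hSFu, hSFv]
    ext y
    simp only [Set.mem_setOf_eq, Set.mem_union, hGqu]
    tauto
  -- disjointness
  have hdisj : Disjoint ((lcGraph F).connectedComponentMk u).supp
      ((lcGraph F).connectedComponentMk v).supp := by
    rw [hSFu, hSFv, Set.disjoint_left]
    rintro y (rfl | ⟨h1, h2⟩) hB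
    · rcases hB with h | ⟨h3, h4⟩
      · exact hne h
      · omega
    · rcases hB with rfl | ⟨h3, h4⟩
      · omega
      · exact hcommon y h1 h3
  have hCuCv : (lcGraph F).connectedComponentMk u ≠ (lcGraph F).connectedComponentMk v := by
    intro h
    have h1 : u ∈ ((lcGraph F).connectedComponentMk u).supp := by
      rw [SimpleGraph.ConnectedComponent.mem_supp_iff]
    have h2 : u ∈ ((lcGraph F).connectedComponentMk v).supp := by
      rw [SimpleGraph.ConnectedComponent.mem_supp_iff, ← h]
    exact Set.disjoint_left.mp hdisj h1 h2
  -- the merged component's supp, abbreviated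
  have huS : u ∈ ((lcGraph (leafContract F u v)).connectedComponentMk u).supp := by
    rw [SimpleGraph.ConnectedComponent.mem_supp_iff]
  have hvS : v ∈ ((lcGraph (leafContract F u v)).connectedComponentMk u).supp := by
    rw [hSGu]
    exact Or.inr (by rw [SimpleGraph.ConnectedComponent.mem_supp_iff])
  -- adjacency away from u, v is unchanged
  have hGpo : ∀ a b : V, a ≠ u → a ≠ v → b ≠ u → b ≠ v →
      ((leafContract F u v).Adj a b ↔ F.Adj a b) := by
    intro a b hau hav hbu hbv
    rw [hGpAdj]
    constructor
    · rintro ⟨h1, (⟨rfl, -⟩ | ⟨rfl, -⟩ | ⟨-, -, -, (h | ⟨rfl, -⟩ | ⟨rfl, -⟩)⟩)⟩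
      · exact absurd rfl hau
      · exact absurd rfl hav
      · exact h
      · exact absurd rfl hau
      · exact absurd rfl hbu
    · intro h
      exact ⟨h.ne, Or.inr (Or.inr ⟨h.ne, hav, hbv, Or.inl h⟩)⟩
  have hagree : ∀ a b : V,
      a ∉ ((lcGraph (leafContract F u v)).connectedComponentMk u).supp →
      b ∉ ((lcGraph (leafContract F u v)).connectedComponentMk u).supp →
      ((lcGraph F).Adj a b ↔ (lcGraph (leafContract F u v)).Adj a b) := by
    intro a b ha hb
    have hau : a ≠ u := fun h => ha (h ▸ huS)
    have hav : a ≠ v := fun h => ha (h ▸ hvS)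
    have hbu : b ≠ u := fun h => hb (h ▸ huS)
    have hbv : b ≠ v := fun h => hb (h ▸ hvS)
    rw [hlc, hlc, hdego a hau hav, hdego b hbu hbv, hGpo a b hau hav hbu hbv]
  have hSclF : ∀ a b : V, (lcGraph F).Adj a b →
      a ∈ ((lcGraph (leafContract F u v)).connectedComponentMk u).supp →
      b ∈ ((lcGraph (leafContract F u v)).connectedComponentMk u).supp := by
    intro a b h ha
    rw [hSGu] at ha ⊢
    rcases ha with ha | ha
    · exact Or.inl (supp_closed h ha)
    · exact Or.inr (supp_closed h ha)
  have hSclG : ∀ a b : V, (lcGraph (leafContract F u v)).Adj a b →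
      a ∈ ((lcGraph (leafContract F u v)).connectedComponentMk u).supp →
      b ∈ ((lcGraph (leafContract F u v)).connectedComponentMk u).supp :=
    fun a b h ha => supp_closed h ha
  have hreachFG : ∀ x, x ∉ ((lcGraph (leafContract F u v)).connectedComponentMk u).supp →
      ∀ y, ((lcGraph F).Reachable x y ↔ (lcGraph (leafContract F u v)).Reachable x y) := by
    intro x hx y
    constructor
    · intro h
      obtain ⟨p⟩ := h
      exact reach_transfer hSclF (fun a b ha hb => (hagree a b ha hb).mp) p hx
    · intro h
      obtain ⟨p⟩ := h
      exact reach_transfer hSclG (fun a b ha hb => (hagree a b ha hb).mpr) p hx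
  have hedge : ∀ a b : V, (lcGraph F).Adj a b →
      (lcGraph (leafContract F u v)).Reachable a b := by
    intro a b hab
    by_cases ha : a ∈ ((lcGraph (leafContract F u v)).connectedComponentMk u).supp
    · have hb := hSclF a b hab ha
      rw [SimpleGraph.ConnectedComponent.mem_supp_iff] at ha hb
      exact SimpleGraph.ConnectedComponent.eq.mp (ha.trans hb.symm)
    · have hb : b ∉ ((lcGraph (leafContract F u v)).connectedComponentMk u).supp :=
        fun h => ha (hSclF b a hab.symm h)
      exact ((hagree a b ha hb).mp hab).reachable
  have hlift : ∀ (x y : V), (lcGraph F).Walk x y →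
      (lcGraph (leafContract F u v)).connectedComponentMk x
        = (lcGraph (leafContract F u v)).connectedComponentMk y := by
    intro x y p
    induction p with
    | nil => rfl
    | cons h q ih => exact (SimpleGraph.ConnectedComponent.sound (hedge _ _ h)).trans ih
  have hinj : ∀ x y : V, x ∉ ((lcGraph (leafContract F u v)).connectedComponentMk u).supp →
      (lcGraph (leafContract F u v)).connectedComponentMk x
        = (lcGraph (leafContract F u v)).connectedComponentMk y →
      (lcGraph F).connectedComponentMk x = (lcGraph F).connectedComponentMk y := by
    intro x y hx h
    exact SimpleGraph.ConnectedComponent.sound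
      ((hreachFG x hx y).mpr (SimpleGraph.ConnectedComponent.eq.mp h))
  have hsuppeq : ∀ x : V, x ∉ ((lcGraph (leafContract F u v)).connectedComponentMk u).supp →
      ((lcGraph (leafContract F u v)).connectedComponentMk x).supp
        = ((lcGraph F).connectedComponentMk x).supp := by
    intro x hx
    ext y
    rw [SimpleGraph.ConnectedComponent.mem_supp_iff,
      SimpleGraph.ConnectedComponent.mem_supp_iff]
    constructor
    · intro h
      exact (hinj x y hx h.symm).symm
    · intro h
      exact (SimpleGraph.ConnectedComponent.sound
        ((hreachFG x hx y).mp (SimpleGraph.ConnectedComponent.eq.mp h.symm))).symm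
  have hxnotS : ∀ x : V,
      (lcGraph F).connectedComponentMk x ≠ (lcGraph F).connectedComponentMk u →
      (lcGraph F).connectedComponentMk x ≠ (lcGraph F).connectedComponentMk v →
      x ∉ ((lcGraph (leafContract F u v)).connectedComponentMk u).supp := by
    intro x h1 h2 hx
    rw [hSGu] at hx
    rcases hx with hx | hx <;>
      rw [SimpleGraph.ConnectedComponent.mem_supp_iff] at hx
    · exact h1 hx
    · exact h2 hx
  have hGquv : (lcGraph (leafContract F u v)).connectedComponentMk u
      = (lcGraph (leafContract F u v)).connectedComponentMk v :=
    SimpleGraph.ConnectedComponent.sound ((hGqu v).mpr (Or.inl rfl)).reachable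
  -- map on components induced by the identity on vertices
  let ψ : (lcGraph F).ConnectedComponent → (lcGraph (leafContract F u v)).ConnectedComponent :=
    SimpleGraph.ConnectedComponent.lift (lcGraph (leafContract F u v)).connectedComponentMk
      (fun a b p _ => hlift a b p)
  have hψmk : ∀ x : V, ψ ((lcGraph F).connectedComponentMk x)
      = (lcGraph (leafContract F u v)).connectedComponentMk x := fun _ => rfl
  -- unfold the goal
  simp only [lcMultiset, compSizes, leafCompOrder]
  set cu := (lcGraph F).connectedComponentMk u with hcu
  set cv := (lcGraph F).connectedComponentMk v with hcv
  set TF := Finset.univ.image (lcGraph F).connectedComponentMk with hTF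
  set T0 := (TF.erase cu).erase cv with hT0def
  have hcuTF : cu ∈ TF := Finset.mem_image_of_mem _ (Finset.mem_univ u)
  have hcvTF : cv ∈ TF := Finset.mem_image_of_mem _ (Finset.mem_univ v)
  have hcvT1 : cv ∈ TF.erase cu := Finset.mem_erase.mpr ⟨Ne.symm hCuCv, hcvTF⟩
  have hTFeq : TF = insert cu (insert cv T0) := by
    rw [hT0def, Finset.insert_erase hcvT1, Finset.insert_erase hcuTF]
  have hcunotin : cu ∉ insert cv T0 := by
    rw [Finset.mem_insert]
    rintro (h | h)
    · exact hCuCv h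
    · rw [hT0def] at h
      exact Finset.notMem_erase cu TF (Finset.mem_of_mem_erase h)
  have hcvnotin : cv ∉ T0 := by rw [hT0def]; exact Finset.notMem_erase _ _
  have hT0rep : ∀ C ∈ T0, ∃ x : V,
      x ∉ ((lcGraph (leafContract F u v)).connectedComponentMk u).supp ∧
      (lcGraph F).connectedComponentMk x = C := by
    intro C hC
    rw [hT0def] at hC
    have hCcv : C ≠ cv := (Finset.mem_erase.mp hC).1
    have hCcu : C ≠ cu := (Finset.mem_erase.mp (Finset.mem_of_mem_erase hC)).1
    obtain ⟨x, -, rfl⟩ := Finset.mem_image.mp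
      (Finset.mem_of_mem_erase (Finset.mem_of_mem_erase hC))
    exact ⟨x, hxnotS x hCcu hCcv, rfl⟩
  have hψu_not : ψ cu ∉ T0.image ψ := by
    intro hmem
    obtain ⟨C, hC, hCe⟩ := Finset.mem_image.mp hmem
    obtain ⟨x, hxS, rfl⟩ := hT0rep C hC
    rw [hT0def] at hC
    have hCcu : (lcGraph F).connectedComponentMk x ≠ cu :=
      (Finset.mem_erase.mp (Finset.mem_of_mem_erase hC)).1
    rw [hψmk x, hcu, hψmk u] at hCe
    exact hCcu (hinj x u hxS hCe)
  have hinjOn : Set.InjOn ψ T0 := by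
    intro C hC D hD h
    obtain ⟨x, hxS, rfl⟩ := hT0rep C hC
    obtain ⟨y, -, rfl⟩ := hT0rep D hD
    rw [hψmk x, hψmk y] at h
    exact hinj x y hxS h
  have himg : (Finset.univ.image (lcGraph (leafContract F u v)).connectedComponentMk)
      = TF.image ψ := by
    rw [hTF, Finset.image_image]
    exact Finset.image_congr (fun x _ => (hψmk x).symm)
  have hψcv : ψ cv = ψ cu := by
    rw [hcu, hcv, hψmk u, hψmk v]
    exact hGquv.symm
  have himg2 : TF.image ψ = insert (ψ cu) (T0.image ψ) := by
    rw [hTFeq, Finset.image_insert, Finset.image_insert, hψcv, Finset.insert_idem]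
  -- head value
  have hhead : Nat.card ((ψ cu).supp) = Nat.card cu.supp + Nat.card cv.supp := by
    rw [hcu, hψmk u]
    rw [Nat.card_coe_set_eq, Nat.card_coe_set_eq, Nat.card_coe_set_eq, hSGu]
    exact Set.ncard_union_eq hdisj (Set.toFinite _) (Set.toFinite _)
  rw [himg, himg2, Finset.insert_val_of_notMem hψu_not,
    Finset.image_val_of_injOn hinjOn, Multiset.map_cons, Multiset.map_map,
    hTFeq, Finset.insert_val_of_notMem hcunotin, Finset.insert_val_of_notMem hcvnotin,
    Multiset.map_cons, Multiset.map_cons, Multiset.erase_cons_head, Multiset.erase_cons_head,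
    hhead]
  congr 1
  apply Multiset.map_congr rfl
  intro C hC
  obtain ⟨x, hxS, rfl⟩ := hT0rep C hC
  simp only [Function.comp_apply, hψmk x]
  rw [hsuppeq x hxS]







end

end CSFPaper
end
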